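/- arXiv:math-ph/0103039 — 5 statements merged into one kernel-verified Lean document; each statement's English description precedes it below -/
import Mathlib

section
/- Let κ be a Markov kernel on a measurable space X. Assume: (a) there exist a measurable set K, a constant δ > 0 and a probability measure ν* on X such that κ(x, A) ≥ δ·ν*(A) for every x ∈ K and every measurable set A; (b) there exists δ' > 0 such that κ(x, K) ≥ δ' for every x ∈ X. Then for every probability measure μ on X and every measurable set A one has (P*²μ)(A) ≥ δδ'·ν*(A). -/
open MeasureTheory ProbabilityTheory
open scoped ENNReal NNReal

theorem doeblin_two_step_lower_bound
    {X : Type*} [MeasurableSpace X] (κ : Kernel X X) [IsMarkovKernel κ]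
    (K : Set X) (hK : MeasurableSet K)
    (δ : ℝ≥0∞) (hδ : 0 < δ) (νstar : Measure X) [IsProbabilityMeasure νstar]
    (ha : ∀ x ∈ K, ∀ A : Set X, MeasurableSet A → δ * νstar A ≤ κ x A)
    (δ' : ℝ≥0∞) (hδ' : 0 < δ')
    (hb : ∀ x : X, δ' ≤ κ x K)
    (μ : Measure X) [IsProbabilityMeasure μ]
    (A : Set X) (hA : MeasurableSet A) :
    δ * δ' * νstar A ≤ ((μ.bind κ).bind κ) A := by
  have hmeasA : Measurable fun x => κ x A := κ.measurable_coe hA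
  have hmeasK : Measurable fun x => κ x K := κ.measurable_coe hK
  have hbindK : δ' ≤ (μ.bind κ) K := by
    rw [Measure.bind_apply hK κ.measurable.aemeasurable]
    calc δ' = ∫⁻ _, δ' ∂μ := by simp
      _ ≤ ∫⁻ x, κ x K ∂μ := lintegral_mono fun x => hb x
  rw [Measure.bind_apply hA κ.measurable.aemeasurable]
  calc δ * δ' * νstar A = δ * νstar A * δ' := by ring
    _ ≤ δ * νstar A * (μ.bind κ) K := by gcongr
    _ = ∫⁻ _ in K, δ * νstar A ∂(μ.bind κ) := by
        rw [setLIntegral_const, mul_comm]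
    _ ≤ ∫⁻ x in K, κ x A ∂(μ.bind κ) :=
        setLIntegral_mono hmeasA fun x hx => ha x hx A hA
    _ ≤ ∫⁻ x, κ x A ∂(μ.bind κ) := setLIntegral_le_lintegral _ _
end

section
/- Let κ be a Markov kernel on a measurable space X. Assume: (a) there exist a measurable set K, a constant δ > 0 and a probability measure ν* on X such that κ(x, A) ≥ δ·ν*(A) for every x ∈ K and every measurable set A; (b) there exists δ' > 0 such that κ(x, K) ≥ δ' for every x ∈ X. Then for any two probability measures μ and ν on X and every natural number n one has ‖P*^(2n)μ − P*^(2n)ν‖_TV ≤ (1 − δδ')ⁿ·‖μ − ν‖_TV. -/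
open MeasureTheory ProbabilityTheory
open scoped ENNReal NNReal

/-- The total variation norm of the difference of two finite measures:
`‖μ - ν‖_TV = (μ-ν)₊(X) + (μ-ν)₋(X)` where `(μ-ν)₊`, `(μ-ν)₋` is the Jordan
decomposition of the signed measure `μ - ν`. -/
noncomputable def tvNorm {X : Type*} [MeasurableSpace X] (μ ν : Measure X)
    [IsFiniteMeasure μ] [IsFiniteMeasure ν] : ℝ≥0∞ :=
  (μ.toSignedMeasure - ν.toSignedMeasure).totalVariation Set.univ

instance bind_isProbabilityMeasure {X : Type*} [MeasurableSpace X]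
    (κ : Kernel X X) [IsMarkovKernel κ] (μ : Measure X) [IsProbabilityMeasure μ] :
    IsProbabilityMeasure (μ.bind κ) := by
  constructor
  rw [Measure.bind_apply MeasurableSet.univ (Kernel.measurable κ).aemeasurable]
  simp

instance iterate_bind_isProbabilityMeasure {X : Type*} [MeasurableSpace X]
    (κ : Kernel X X) [IsMarkovKernel κ] (μ : Measure X) [IsProbabilityMeasure μ] (n : ℕ) :
    IsProbabilityMeasure ((fun m : Measure X => m.bind κ)^[n] μ) := by
  induction n with
  | zero => simpa
  | succ n ih => rw [Function.iterate_succ_apply']; exact bind_isProbabilityMeasure κ _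

section Aux

variable {X : Type*} [MeasurableSpace X]

lemma bind_add_meas (a b : Measure X) {f : X → Measure X} (hf : Measurable f) :
    (a + b).bind f = a.bind f + b.bind f := by
  ext s hs
  rw [Measure.bind_apply hs hf.aemeasurable, Measure.add_apply, Measure.bind_apply hs hf.aemeasurable,
    Measure.bind_apply hs hf.aemeasurable, lintegral_add_measure]

lemma jordan_add_eq (μ ν : Measure X) [IsFiniteMeasure μ] [IsFiniteMeasure ν] :
    μ + (μ.toSignedMeasure - ν.toSignedMeasure).toJordanDecomposition.negPart
      = ν + (μ.toSignedMeasure - ν.toSignedMeasure).toJordanDecomposition.posPart := by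
  set s := μ.toSignedMeasure - ν.toSignedMeasure with hs_def
  set p := s.toJordanDecomposition.posPart with hp_def
  set q := s.toJordanDecomposition.negPart with hq_def
  have hs : p.toSignedMeasure - q.toSignedMeasure = s :=
    s.toSignedMeasure_toJordanDecomposition
  ext A hA
  have h1 : s A = (μ A).toReal - (ν A).toReal := Measure.toSignedMeasure_sub_apply hA
  have h2 : s A = (p A).toReal - (q A).toReal := by
    rw [← hs]; exact Measure.toSignedMeasure_sub_apply hA
  rw [Measure.add_apply, Measure.add_apply]
  have hfin : μ A + q A ≠ ⊤ := by
    simp [ENNReal.add_ne_top, measure_ne_top]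
  have hfin' : ν A + p A ≠ ⊤ := by
    simp [ENNReal.add_ne_top, measure_ne_top]
  rw [← ENNReal.toReal_eq_toReal_iff' hfin hfin',
    ENNReal.toReal_add (measure_ne_top _ _) (measure_ne_top _ _),
    ENNReal.toReal_add (measure_ne_top _ _) (measure_ne_top _ _)]
  linarith

lemma tvNorm_le_of_add_eq (a b p q : Measure X) [IsFiniteMeasure a] [IsFiniteMeasure b]
    [IsFiniteMeasure p] [IsFiniteMeasure q] (h : a + q = b + p) :
    tvNorm a b ≤ p Set.univ + q Set.univ := by
  set s := a.toSignedMeasure - b.toSignedMeasure with hs_def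
  obtain ⟨i, hi₁, hi₂, hi₃, hpos, hneg⟩ := s.toJordanDecomposition_spec
  have key : ∀ A : Set X, MeasurableSet A →
      s A = (p A).toReal - (q A).toReal := by
    intro A hA
    have h1 : s A = (a A).toReal - (b A).toReal := Measure.toSignedMeasure_sub_apply hA
    have h2 : (a A).toReal + (q A).toReal = (b A).toReal + (p A).toReal := by
      have hA2 : (a + q) A = (b + p) A := by rw [h]
      rw [Measure.add_apply, Measure.add_apply] at hA2
      rw [← ENNReal.toReal_add (measure_ne_top _ _) (measure_ne_top _ _),
        ← ENNReal.toReal_add (measure_ne_top _ _) (measure_ne_top _ _), hA2]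
    linarith
  have hposle : s.toJordanDecomposition.posPart Set.univ ≤ p Set.univ := by
    rw [hpos, SignedMeasure.toMeasureOfZeroLE_apply _ hi₂ hi₁ MeasurableSet.univ]
    rw [← ENNReal.toReal_le_toReal ENNReal.coe_ne_top (measure_ne_top _ _)]
    simp only [ENNReal.coe_toReal, NNReal.coe_mk]
    have hk := key (i ∩ Set.univ) (hi₁.inter MeasurableSet.univ)
    have h1 : (q (i ∩ Set.univ)).toReal ≥ 0 := ENNReal.toReal_nonneg
    have h2 : (p (i ∩ Set.univ)).toReal ≤ (p Set.univ).toReal :=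
      ENNReal.toReal_mono (measure_ne_top _ _) (measure_mono (Set.subset_univ _))
    linarith
  have hnegle : s.toJordanDecomposition.negPart Set.univ ≤ q Set.univ := by
    rw [hneg, SignedMeasure.toMeasureOfLEZero_apply _ hi₃ hi₁.compl MeasurableSet.univ]
    rw [← ENNReal.toReal_le_toReal ENNReal.coe_ne_top (measure_ne_top _ _)]
    simp only [ENNReal.coe_toReal, NNReal.coe_mk]
    have hk := key (iᶜ ∩ Set.univ) (hi₁.compl.inter MeasurableSet.univ)
    have h1 : (p (iᶜ ∩ Set.univ)).toReal ≥ 0 := ENNReal.toReal_nonneg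
    have h2 : (q (iᶜ ∩ Set.univ)).toReal ≤ (q Set.univ).toReal :=
      ENNReal.toReal_mono (measure_ne_top _ _) (measure_mono (Set.subset_univ _))
    linarith
  rw [tvNorm, ← hs_def, SignedMeasure.totalVariation, Measure.add_apply]
  exact add_le_add hposle hnegle

lemma tvNorm_congr {a a' b b' : Measure X} [IsFiniteMeasure a] [IsFiniteMeasure a']
    [IsFiniteMeasure b] [IsFiniteMeasure b'] (ha : a = a') (hb : b = b') :
    tvNorm a b = tvNorm a' b' := by
  subst ha; subst hb; rfl

lemma tvNorm_eq_parts (μ ν : Measure X) [IsFiniteMeasure μ] [IsFiniteMeasure ν] :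
    tvNorm μ ν = (μ.toSignedMeasure - ν.toSignedMeasure).toJordanDecomposition.posPart Set.univ
      + (μ.toSignedMeasure - ν.toSignedMeasure).toJordanDecomposition.negPart Set.univ := by
  rw [tvNorm, SignedMeasure.totalVariation, Measure.add_apply]

lemma parts_univ_eq (μ ν : Measure X) [IsProbabilityMeasure μ] [IsProbabilityMeasure ν] :
    (μ.toSignedMeasure - ν.toSignedMeasure).toJordanDecomposition.posPart Set.univ
      = (μ.toSignedMeasure - ν.toSignedMeasure).toJordanDecomposition.negPart Set.univ := by
  have h := jordan_add_eq μ ν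
  have h2 : (μ + (μ.toSignedMeasure - ν.toSignedMeasure).toJordanDecomposition.negPart)
      Set.univ = (ν + (μ.toSignedMeasure - ν.toSignedMeasure).toJordanDecomposition.posPart)
      Set.univ := by rw [h]
  rw [Measure.add_apply, Measure.add_apply, show μ Set.univ = 1 from measure_univ,
    show ν Set.univ = 1 from measure_univ] at h2
  exact ((ENNReal.add_right_inj ENNReal.one_ne_top).mp h2).symm

end Aux

section Step

variable {X : Type*} [MeasurableSpace X]

lemma tv_contraction_step (κ : Kernel X X) [IsMarkovKernel κ]
    (νstar : Measure X) [IsProbabilityMeasure νstar] (ε : ℝ≥0∞)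
    (hmin : ∀ x : X, ∀ A : Set X, MeasurableSet A → ε * νstar A ≤ ((κ x).bind κ) A)
    (μ ν : Measure X) [IsProbabilityMeasure μ] [IsProbabilityMeasure ν] :
    tvNorm ((μ.bind κ).bind κ) ((ν.bind κ).bind κ) ≤ (1 - ε) * tvNorm μ ν := by
  set κ2 : X → Measure X := fun x => (κ x).bind κ with hκ2_def
  have hκ2 : Measurable κ2 :=
    (Measure.measurable_bind' κ.measurable).comp κ.measurable
  have hκ2prob : ∀ x, IsProbabilityMeasure (κ2 x) := fun x => by
    constructor
    rw [Measure.bind_apply MeasurableSet.univ (Kernel.measurable κ).aemeasurable]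
    simp
  -- mass preservation
  have hmass : ∀ r : Measure X, (r.bind κ2) Set.univ = r Set.univ := by
    intro r
    rw [Measure.bind_apply MeasurableSet.univ hκ2.aemeasurable]
    have : ∀ x, κ2 x Set.univ = 1 := fun x => (hκ2prob x).measure_univ
    simp [this]
  set s := μ.toSignedMeasure - ν.toSignedMeasure with hs_def
  set p := s.toJordanDecomposition.posPart with hp_def
  set q := s.toJordanDecomposition.negPart with hq_def
  set m := p Set.univ with hm_def
  have hqm : q Set.univ = m := (parts_univ_eq μ ν).symm
  have hm_fin : m ≠ ⊤ := measure_ne_top p _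
  -- lower bound for bind of a finite measure
  have hbound : ∀ (r : Measure X), ∀ A : Set X, MeasurableSet A →
      (ε * r Set.univ) * νstar A ≤ (r.bind κ2) A := by
    intro r A hA
    rw [Measure.bind_apply hA hκ2.aemeasurable]
    calc (ε * r Set.univ) * νstar A = (ε * νstar A) * r Set.univ := by ring
      _ = ∫⁻ _, ε * νstar A ∂r := by rw [lintegral_const]
      _ ≤ ∫⁻ x, κ2 x A ∂r := lintegral_mono fun x => hmin x A hA
  set c : Measure X := (ε * m) • νstar with hc_def
  have hcp : c ≤ p.bind κ2 := by
    refine Measure.le_iff.mpr fun A hA => ?_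
    have := hbound p A hA
    simpa [hc_def, Measure.smul_apply, smul_eq_mul, ← hm_def] using this
  have hcq : c ≤ q.bind κ2 := by
    refine Measure.le_iff.mpr fun A hA => ?_
    have := hbound q A hA
    rw [hqm] at this
    simpa [hc_def, Measure.smul_apply, smul_eq_mul] using this
  haveI hpb_fin : IsFiniteMeasure (p.bind κ2) :=
    ⟨by rw [hmass]; exact measure_lt_top p _⟩
  haveI hqb_fin : IsFiniteMeasure (q.bind κ2) :=
    ⟨by rw [hmass]; exact measure_lt_top q _⟩
  haveI hc_fin : IsFiniteMeasure c :=
    ⟨lt_of_le_of_lt (Measure.le_iff'.mp hcp Set.univ)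
      (by rw [hmass]; exact measure_lt_top p _)⟩
  set p' : Measure X := p.bind κ2 - c with hp'_def
  set q' : Measure X := q.bind κ2 - c with hq'_def
  have hp'add : p' + c = p.bind κ2 := Measure.sub_add_cancel_of_le hcp
  have hq'add : q' + c = q.bind κ2 := Measure.sub_add_cancel_of_le hcq
  haveI hp'_fin : IsFiniteMeasure p' :=
    ⟨lt_of_le_of_lt (Measure.le_iff'.mp MeasureTheory.Measure.sub_le Set.univ)
      (by rw [hmass]; exact measure_lt_top p _)⟩
  haveI hq'_fin : IsFiniteMeasure q' :=
    ⟨lt_of_le_of_lt (Measure.le_iff'.mp MeasureTheory.Measure.sub_le Set.univ)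
      (by rw [hmass]; exact measure_lt_top q _)⟩
  have hc_univ : c Set.univ = ε * m := by
    simp [hc_def, Measure.smul_apply, smul_eq_mul]
  have hεm_le : ε * m ≤ m := by
    have := Measure.le_iff'.mp hcp Set.univ
    rwa [hc_univ, hmass] at this
  have hp'_univ : p' Set.univ = m - ε * m := by
    have h1 : p' Set.univ + c Set.univ = m := by
      rw [← Measure.add_apply, hp'add, hmass]
    rw [hc_univ] at h1
    exact ENNReal.eq_sub_of_add_eq (ne_top_of_le_ne_top hm_fin hεm_le) h1
  have hq'_univ : q' Set.univ = m - ε * m := by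
    have h1 : q' Set.univ + c Set.univ = m := by
      rw [← Measure.add_apply, hq'add, hmass, hqm]
    rw [hc_univ] at h1
    exact ENNReal.eq_sub_of_add_eq (ne_top_of_le_ne_top hm_fin hεm_le) h1
  -- the key measure identity
  have hbindeq : μ.bind κ2 + q.bind κ2 = ν.bind κ2 + p.bind κ2 := by
    rw [← bind_add_meas _ _ hκ2, ← bind_add_meas _ _ hκ2, jordan_add_eq μ ν]
  have hkey : μ.bind κ2 + q' = ν.bind κ2 + p' := by
    ext A hA
    have h1 : (μ.bind κ2) A + ((q' A) + c A) = (ν.bind κ2) A + ((p' A) + c A) := by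
      have := congrArg (fun (ρ : Measure X) => ρ A) hbindeq
      simp only [Measure.add_apply] at this
      rw [← Measure.add_apply q' c, hq'add, ← Measure.add_apply p' c, hp'add]
      exact this
    rw [← add_assoc, ← add_assoc] at h1
    rw [Measure.add_apply, Measure.add_apply]
    exact (ENNReal.add_left_inj (measure_ne_top c A)).mp h1
  have hbb : ∀ r : Measure X, (r.bind κ).bind κ = r.bind κ2 := fun r =>
    Measure.bind_bind κ.measurable.aemeasurable κ.measurable.aemeasurable
  haveI hfinμ : IsFiniteMeasure (μ.bind κ2) :=
    ⟨by rw [hmass]; exact measure_lt_top μ _⟩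
  haveI hfinν : IsFiniteMeasure (ν.bind κ2) :=
    ⟨by rw [hmass]; exact measure_lt_top ν _⟩
  have hsub : (1 - ε) * m = m - ε * m := by
    rw [ENNReal.sub_mul fun _ _ => hm_fin, one_mul]
  rw [← hbb μ, ← hbb ν] at hkey
  calc tvNorm ((μ.bind κ).bind κ) ((ν.bind κ).bind κ)
      ≤ p' Set.univ + q' Set.univ := tvNorm_le_of_add_eq _ _ _ _ hkey
    _ = (1 - ε) * m + (1 - ε) * m := by rw [hp'_univ, hq'_univ, hsub]
    _ = (1 - ε) * (m + m) := by ring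
    _ = (1 - ε) * tvNorm μ ν := by rw [tvNorm_eq_parts μ ν, ← hp_def, ← hq_def, hqm]

end Step
theorem doeblin_iterated_tv_contraction
    {X : Type*} [MeasurableSpace X] (κ : Kernel X X) [IsMarkovKernel κ]
    (K : Set X) (hK : MeasurableSet K)
    (δ : ℝ≥0∞) (hδ : 0 < δ) (νstar : Measure X) [IsProbabilityMeasure νstar]
    (ha : ∀ x ∈ K, ∀ A : Set X, MeasurableSet A → δ * νstar A ≤ κ x A)
    (δ' : ℝ≥0∞) (hδ' : 0 < δ')
    (hb : ∀ x : X, δ' ≤ κ x K)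
    (μ ν : Measure X) [IsProbabilityMeasure μ] [IsProbabilityMeasure ν] (n : ℕ) :
    tvNorm ((fun m : Measure X => m.bind κ)^[2 * n] μ)
        ((fun m : Measure X => m.bind κ)^[2 * n] ν)
      ≤ (1 - δ * δ') ^ n * tvNorm μ ν := by
  -- two-step minorization
  have hmin : ∀ x : X, ∀ A : Set X, MeasurableSet A →
      (δ * δ') * νstar A ≤ ((κ x).bind κ) A := by
    intro x A hA
    rw [Measure.bind_apply hA κ.measurable.aemeasurable]
    calc (δ * δ') * νstar A = (δ * νstar A) * δ' := by ring
      _ ≤ (δ * νstar A) * κ x K := mul_le_mul_right (hb x) _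
      _ = ∫⁻ _ in K, δ * νstar A ∂(κ x) := by rw [setLIntegral_const, mul_comm]
      _ ≤ ∫⁻ y in K, κ y A ∂(κ x) :=
        setLIntegral_mono (κ.measurable_coe hA) fun y hy => ha y hy A hA
      _ ≤ ∫⁻ y, κ y A ∂(κ x) := setLIntegral_le_lintegral _ _
  set f : Measure X → Measure X := fun m => m.bind κ with hf_def
  induction n with
  | zero => simp
  | succ n ih =>
    have e : ∀ r : Measure X, f^[2 * (n + 1)] r = ((f^[2 * n] r).bind κ).bind κ := by
      intro r
      rw [show 2 * (n + 1) = 2 * n + 1 + 1 by ring, Function.iterate_succ_apply',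
        Function.iterate_succ_apply']
    calc tvNorm (f^[2 * (n + 1)] μ) (f^[2 * (n + 1)] ν)
        = tvNorm (((f^[2 * n] μ).bind κ).bind κ) (((f^[2 * n] ν).bind κ).bind κ) :=
          tvNorm_congr (e μ) (e ν)
      _
        ≤ (1 - δ * δ') * tvNorm (f^[2 * n] μ) (f^[2 * n] ν) :=
          tv_contraction_step κ νstar (δ * δ') hmin _ _
      _ ≤ (1 - δ * δ') * ((1 - δ * δ') ^ n * tvNorm μ ν) := mul_le_mul_right ih _
      _ = (1 - δ * δ') ^ (n + 1) * tvNorm μ ν := by ring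
end

section
/- Let κ be a Markov kernel on a measurable space X. Assume: (a) there exist a measurable set K, a constant δ > 0 and a probability measure ν* on X such that κ(x, A) ≥ δ·ν*(A) for every x ∈ K and every measurable set A; (b) there exists δ' > 0 such that κ(x, K) ≥ δ' for every x ∈ X. Then κ has at most one invariant probability measure, i.e. if μ and ν are probability measures with P*μ = μ and P*ν = ν, then μ = ν. -/
open MeasureTheory ProbabilityTheory
open scoped ENNReal NNReal

/-- A measure dominated by a finite measure with the same total mass equals it. -/
lemma eq_of_le_of_univ_eq {X : Type*} [MeasurableSpace X] {a b : Measure X}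
    [IsFiniteMeasure b] (hle : a ≤ b) (huniv : a Set.univ = b Set.univ) : a = b := by
  ext A hA
  have h1 : a A + a Aᶜ = a Set.univ := measure_add_measure_compl hA
  have h2 : b A + b Aᶜ = b Set.univ := measure_add_measure_compl hA
  have hA1 : a A ≤ b A := hle A
  have hA2 : a Aᶜ ≤ b Aᶜ := hle Aᶜ
  by_contra hne
  have hlt : a A < b A := lt_of_le_of_ne hA1 hne
  have : a Set.univ < b Set.univ := by
    calc a Set.univ = a A + a Aᶜ := h1.symm
    _ < b A + b Aᶜ := ENNReal.add_lt_add_of_lt_of_le ((hA2.trans_lt (measure_lt_top b Aᶜ)).ne) hlt hA2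
    _ = b Set.univ := h2
  exact absurd huniv this.ne

theorem doeblin_unique_invariant_measure
    {X : Type*} [MeasurableSpace X] (κ : Kernel X X) [IsMarkovKernel κ]
    (K : Set X) (hK : MeasurableSet K)
    (δ : ℝ≥0∞) (hδ : 0 < δ) (νstar : Measure X) [IsProbabilityMeasure νstar]
    (ha : ∀ x ∈ K, ∀ A : Set X, MeasurableSet A → δ * νstar A ≤ κ x A)
    (δ' : ℝ≥0∞) (hδ' : 0 < δ')
    (hb : ∀ x : X, δ' ≤ κ x K)
    (μ ν : Measure X) [IsProbabilityMeasure μ] [IsProbabilityMeasure ν]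
    (hμ : μ.bind κ = μ) (hν : ν.bind κ = ν) :
    μ = ν := by
  classical
  -- the two-step kernel, as a function
  set f : X → Measure X := fun x => (κ x).bind κ with hf_def
  have hκm : Measurable (κ : X → Measure X) := κ.measurable
  have hf : Measurable f := (Measure.measurable_bind' hκm).comp hκm
  -- two-step invariance
  have hμ2 : μ.bind f = μ := by
    rw [hf_def, ← Measure.bind_bind hκm.aemeasurable hκm.aemeasurable, hμ, hμ]
  have hν2 : ν.bind f = ν := by
    rw [hf_def, ← Measure.bind_bind hκm.aemeasurable hκm.aemeasurable, hν, hν]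
  -- f x is a probability measure (total mass 1)
  have hfuniv : ∀ x : X, f x Set.univ = 1 := by
    intro x
    rw [hf_def]
    simp only
    rw [Measure.bind_apply MeasurableSet.univ hκm.aemeasurable]
    simp
  -- Doeblin minorization for the two-step kernel
  set ε : ℝ≥0∞ := δ * δ' with hε_def
  have hεpos : 0 < ε := ENNReal.mul_pos hδ.ne' hδ'.ne'
  have hmin : ∀ x : X, ∀ A : Set X, MeasurableSet A → ε * νstar A ≤ f x A := by
    intro x A hA
    have h1 : f x A = ∫⁻ y, κ y A ∂(κ x) := Measure.bind_apply hA hκm.aemeasurable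
    have h2 : ∫⁻ y in K, κ y A ∂(κ x) ≤ ∫⁻ y, κ y A ∂(κ x) :=
      setLIntegral_le_lintegral _ _
    have h3 : ∫⁻ y in K, δ * νstar A ∂(κ x) ≤ ∫⁻ y in K, κ y A ∂(κ x) := by
      refine setLIntegral_mono (κ.measurable_coe hA) ?_
      intro y hy
      exact ha y hy A hA
    have h4 : ∫⁻ y in K, δ * νstar A ∂(κ x) = δ * νstar A * κ x K := by
      rw [setLIntegral_const]
    calc ε * νstar A = δ * νstar A * δ' := by ring
    _ ≤ δ * νstar A * κ x K := by
        exact mul_le_mul_right (hb x) _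
    _ = ∫⁻ y in K, δ * νstar A ∂(κ x) := h4.symm
    _ ≤ ∫⁻ y in K, κ y A ∂(κ x) := h3
    _ ≤ ∫⁻ y, κ y A ∂(κ x) := h2
    _ = f x A := h1.symm
  -- the common part ρ = μ ⊓ ν
  set ρ : Measure X := μ ⊓ ν with hρ_def
  have hρμ : ρ ≤ μ := inf_le_left
  have hρν : ρ ≤ ν := inf_le_right
  have : IsFiniteMeasure ρ := isFiniteMeasure_of_le μ hρμ
  -- ρ is invariant for f
  have hρbind_le : ρ.bind f ≤ μ := by
    rw [← hμ2]
    refine Measure.le_iff.mpr fun A hA => ?_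
    rw [Measure.bind_apply hA hf.aemeasurable, Measure.bind_apply hA hf.aemeasurable]
    exact lintegral_mono' hρμ le_rfl
  have hρbind_le' : ρ.bind f ≤ ν := by
    rw [← hν2]
    refine Measure.le_iff.mpr fun A hA => ?_
    rw [Measure.bind_apply hA hf.aemeasurable, Measure.bind_apply hA hf.aemeasurable]
    exact lintegral_mono' hρν le_rfl
  have hρbind_univ : ρ.bind f Set.univ = ρ Set.univ := by
    rw [Measure.bind_apply MeasurableSet.univ hf.aemeasurable]
    simp only [hfuniv]
    simp
  have hρbind : ρ.bind f = ρ := by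
    refine eq_of_le_of_univ_eq (le_inf hρbind_le hρbind_le') hρbind_univ
  -- the residual parts
  set σ : Measure X := μ - ρ with hσ_def
  set τ : Measure X := ν - ρ with hτ_def
  have hσadd : σ + ρ = μ := Measure.sub_add_cancel_of_le hρμ
  have hτadd : τ + ρ = ν := Measure.sub_add_cancel_of_le hρν
  -- lower bound on σ and τ
  have key : ∀ (η ηres : Measure X), ηres + ρ = η → η.bind f = η →
      ∀ A : Set X, MeasurableSet A → ηres Set.univ * (ε * νstar A) ≤ ηres A := by
    intro η ηres hadd hinv A hA
    have hsplit : ∫⁻ x, f x A ∂ηres + ∫⁻ x, f x A ∂ρ = η A := by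
      rw [← lintegral_add_measure, hadd, ← Measure.bind_apply hA hf.aemeasurable, hinv]
    have hρA : ∫⁻ x, f x A ∂ρ = ρ A := by
      rw [← Measure.bind_apply hA hf.aemeasurable, hρbind]
    have hηA : η A = ηres A + ρ A := by
      rw [← hadd]; simp
    have hres : ∫⁻ x, f x A ∂ηres = ηres A := by
      have h := hsplit
      rw [hρA, hηA] at h
      exact (ENNReal.add_left_inj (measure_ne_top ρ A)).mp h
    calc ηres Set.univ * (ε * νstar A) = ∫⁻ _, ε * νstar A ∂ηres := by
          rw [lintegral_const]; ring
    _ ≤ ∫⁻ x, f x A ∂ηres := lintegral_mono fun x => hmin x A hA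
    _ = ηres A := hres
  -- total masses
  have hσuniv : σ Set.univ = 1 - ρ Set.univ := by
    have h := congrArg (fun m : Measure X => m Set.univ) hσadd
    simp only [Measure.add_apply] at h
    rw [show μ Set.univ = 1 from measure_univ] at h
    exact ENNReal.eq_sub_of_add_eq (measure_ne_top ρ _) h
  have hτuniv : τ Set.univ = 1 - ρ Set.univ := by
    have h := congrArg (fun m : Measure X => m Set.univ) hτadd
    simp only [Measure.add_apply] at h
    rw [show ν Set.univ = 1 from measure_univ] at h
    exact ENNReal.eq_sub_of_add_eq (measure_ne_top ρ _) h
  set c : ℝ≥0∞ := ρ Set.univ with hc_def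
  -- the common lower bound measure
  set m : Measure X := ((1 - c) * ε) • νstar with hm_def
  have hmσ : m ≤ σ := by
    refine Measure.le_iff.mpr fun A hA => ?_
    have := key μ σ hσadd hμ2 A hA
    rw [hσuniv] at this
    simpa [hm_def, mul_assoc] using this
  have hmτ : m ≤ τ := by
    refine Measure.le_iff.mpr fun A hA => ?_
    have := key ν τ hτadd hν2 A hA
    rw [hτuniv] at this
    simpa [hm_def, mul_assoc] using this
  -- ρ + σ ⊓ τ ≤ ρ, hence σ ⊓ τ has zero mass
  have hinfle : ρ + σ ⊓ τ ≤ ρ := by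
    refine le_inf ?_ ?_ |>.trans (le_of_eq rfl)
    · calc ρ + σ ⊓ τ ≤ ρ + σ := add_le_add_right inf_le_left _
      _ = μ := by rw [add_comm]; exact hσadd
    · calc ρ + σ ⊓ τ ≤ ρ + τ := add_le_add_right inf_le_right _
      _ = ν := by rw [add_comm]; exact hτadd
  have hzero : (σ ⊓ τ) Set.univ = 0 := by
    have h := hinfle Set.univ
    simp only [Measure.add_apply] at h
    have : c + (σ ⊓ τ) Set.univ ≤ c := h
    by_contra hne
    have hpos : 0 < (σ ⊓ τ) Set.univ := pos_iff_ne_zero.mpr hne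
    have : c < c + (σ ⊓ τ) Set.univ :=
      ENNReal.lt_add_right (measure_ne_top ρ _) hpos.ne'
    exact absurd h (not_le.mpr this)
  have hmzero : m Set.univ = 0 := by
    have h := le_trans (le_inf hmσ hmτ) (le_of_eq rfl) Set.univ
    have := (le_inf hmσ hmτ) Set.univ
    rw [hzero] at this
    exact le_antisymm this zero_le
  have hc1 : c = 1 := by
    have : (1 - c) * ε = 0 := by
      have := hmzero
      simpa [hm_def] using this
    rcases mul_eq_zero.mp this with h | h
    · have : (1 : ℝ≥0∞) ≤ c := by
        by_contra hlt
        push_neg at hlt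
        exact absurd h (tsub_pos_of_lt hlt).ne'
      exact le_antisymm (by rw [hc_def, ← measure_univ (μ := μ)]; exact hρμ Set.univ) this
    · exact absurd h hεpos.ne'
  -- conclude: ρ = μ and ρ = ν
  have hρμ' : ρ = μ := eq_of_le_of_univ_eq hρμ (by rw [← hc_def, hc1, measure_univ])
  have hρν' : ρ = ν := eq_of_le_of_univ_eq hρν (by rw [← hc_def, hc1, measure_univ])
  rw [← hρμ', hρν']
end

section
/- Let κ be a Markov kernel on a measurable space X. Assume: (a) there exist a measurable set K, a constant δ > 0 and a probability measure ν* on X such that κ(x, A) ≥ δ·ν*(A) for every x ∈ K and every measurable set A; (b) there exists δ' > 0 such that κ(x, K) ≥ δ' for every x ∈ X. Then κ has a unique invariant probability measure μ*, and for every probability measure μ on X and every natural number n one has ‖P*ⁿμ − μ*‖_TV ≤ 2·(1 − δδ')^⌊n/2⌋. -/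
open MeasureTheory ProbabilityTheory
open scoped ENNReal NNReal

namespace DoeblinAux

variable {X : Type*} [MeasurableSpace X]

lemma measure_add_cancel (α β ρ : Measure X) [IsFiniteMeasure ρ] (h : α + ρ = β + ρ) : α = β := by
  ext A hA
  have h2 := Measure.ext_iff.mp h A hA
  simp only [Measure.add_apply] at h2
  exact WithTop.add_right_cancel (measure_ne_top ρ A) h2

lemma toSigned_sub_eq (μ ν p q : Measure X) [IsFiniteMeasure μ] [IsFiniteMeasure ν]
    [IsFiniteMeasure p] [IsFiniteMeasure q] (h : μ + q = ν + p) :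
    μ.toSignedMeasure - ν.toSignedMeasure = p.toSignedMeasure - q.toSignedMeasure := by
  have h2 := Measure.toSignedMeasure_congr h
  rw [Measure.toSignedMeasure_add, Measure.toSignedMeasure_add] at h2
  rw [sub_eq_sub_iff_add_eq_add]
  linear_combination (norm := abel) h2

lemma tvNorm_eq_of_add_eq (μ ν p q : Measure X) [IsFiniteMeasure μ] [IsFiniteMeasure ν]
    [IsFiniteMeasure p] [IsFiniteMeasure q] (h : μ + q = ν + p) :
    tvNorm μ ν = tvNorm p q := by
  unfold tvNorm
  rw [toSigned_sub_eq μ ν p q h]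

lemma exists_jordan (μ ν : Measure X) [IsFiniteMeasure μ] [IsFiniteMeasure ν] :
    ∃ (p q : Measure X) (_ : IsFiniteMeasure p) (_ : IsFiniteMeasure q),
      μ + q = ν + p ∧ tvNorm μ ν = p Set.univ + q Set.univ ∧ p ⟂ₘ q := by
  set s := μ.toSignedMeasure - ν.toSignedMeasure with hs
  set j := s.toJordanDecomposition with hj
  refine ⟨j.posPart, j.negPart, inferInstance, inferInstance, ?_, ?_, j.mutuallySingular⟩
  · have hspec : j.toSignedMeasure = s := s.toSignedMeasure_toJordanDecomposition
    rw [JordanDecomposition.toSignedMeasure, hs] at hspec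
    have : (μ + j.negPart).toSignedMeasure = (ν + j.posPart).toSignedMeasure := by
      rw [Measure.toSignedMeasure_add, Measure.toSignedMeasure_add]
      linear_combination (norm := abel) -hspec
    exact Measure.toSignedMeasure_eq_toSignedMeasure_iff.mp this
  · show s.totalVariation Set.univ = _
    rw [SignedMeasure.totalVariation, Measure.add_apply]

lemma tvNorm_le (μ ν : Measure X) [IsFiniteMeasure μ] [IsFiniteMeasure ν] :
    tvNorm μ ν ≤ μ Set.univ + ν Set.univ := by
  obtain ⟨p, q, hfp, hfq, hadd, htv, hsing⟩ := exists_jordan μ ν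
  obtain ⟨u, hu, hp0, hq0⟩ := hsing
  have hpu : p Set.univ ≤ μ Set.univ := by
    have h1 : p Set.univ = p uᶜ := by
      rw [← measure_add_measure_compl hu (μ := p), hp0, zero_add]
    have h2 := Measure.ext_iff.mp hadd uᶜ hu.compl
    simp only [Measure.add_apply, hq0, add_zero] at h2
    rw [h1]
    calc p uᶜ ≤ ν uᶜ + p uᶜ := le_add_self
      _ = μ uᶜ := h2.symm
      _ ≤ μ Set.univ := measure_mono (Set.subset_univ _)
  have hqu : q Set.univ ≤ ν Set.univ := by
    have h1 : q Set.univ = q u := by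
      rw [← measure_add_measure_compl hu (μ := q), hq0, add_zero]
    have h2 := Measure.ext_iff.mp hadd u hu
    simp only [Measure.add_apply, hp0, add_zero] at h2
    rw [h1]
    calc q u ≤ μ u + q u := le_add_self
      _ = ν u := h2
      _ ≤ ν Set.univ := measure_mono (Set.subset_univ _)
  rw [htv]
  exact add_le_add hpu hqu

lemma tvNorm_congr (α α' β β' : Measure X) [IsFiniteMeasure α] [IsFiniteMeasure α']
    [IsFiniteMeasure β] [IsFiniteMeasure β'] (h1 : α = α') (h2 : β = β') :
    tvNorm α β = tvNorm α' β' := by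
  subst h1; subst h2; rfl

lemma tvNorm_eq_zero (μ ν : Measure X) [IsFiniteMeasure μ] [IsFiniteMeasure ν]
    (h : tvNorm μ ν = 0) : μ = ν := by
  obtain ⟨p, q, hfp, hfq, hadd, htv, hsing⟩ := exists_jordan μ ν
  rw [htv] at h
  have hp : p = 0 := Measure.measure_univ_eq_zero.mp (by simpa using (add_eq_zero.mp h).1)
  have hq : q = 0 := Measure.measure_univ_eq_zero.mp (by simpa using (add_eq_zero.mp h).2)
  rw [hp, hq, add_zero, add_zero] at hadd
  exact hadd



set_option linter.unusedSectionVars false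

variable {X : Type*} [MeasurableSpace X] (κ : Kernel X X) [IsMarkovKernel κ]

lemma bind_univ (m : Measure X) : (m.bind κ) Set.univ = m Set.univ := by
  rw [Measure.bind_apply MeasurableSet.univ (Kernel.measurable κ).aemeasurable]
  simp

instance bind_isFiniteMeasure (m : Measure X) [IsFiniteMeasure m] :
    IsFiniteMeasure (m.bind κ) :=
  ⟨by rw [bind_univ]; exact measure_lt_top _ _⟩

lemma bind_add (m m' : Measure X) : (m + m').bind κ = m.bind κ + m'.bind κ := by
  ext A hA
  rw [Measure.bind_apply hA (Kernel.measurable κ).aemeasurable, Measure.add_apply,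
    Measure.bind_apply hA (Kernel.measurable κ).aemeasurable, Measure.bind_apply hA (Kernel.measurable κ).aemeasurable,
    lintegral_add_measure]

lemma bind_smul (c : ℝ≥0∞) (m : Measure X) : (c • m).bind κ = c • m.bind κ := by
  ext A hA
  rw [Measure.bind_apply hA (Kernel.measurable κ).aemeasurable, Measure.smul_apply,
    Measure.bind_apply hA (Kernel.measurable κ).aemeasurable, lintegral_smul_measure, smul_eq_mul]

lemma bind_sum (M : ℕ → Measure X) :
    (Measure.sum M).bind κ = Measure.sum (fun n => (M n).bind κ) := by
  ext A hA
  rw [Measure.bind_apply hA (Kernel.measurable κ).aemeasurable, Measure.sum_apply _ hA,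
    lintegral_sum_measure]
  exact tsum_congr fun n => (Measure.bind_apply hA (Kernel.measurable κ).aemeasurable).symm

lemma minorization (K : Set X) (hK : MeasurableSet K)
    (δ : ℝ≥0∞) (νstar : Measure X) [IsProbabilityMeasure νstar]
    (ha : ∀ x ∈ K, ∀ A : Set X, MeasurableSet A → δ * νstar A ≤ κ x A)
    (δ' : ℝ≥0∞) (hb : ∀ x : X, δ' ≤ κ x K) (m : Measure X) :
    ((δ * δ' * m Set.univ) • νstar) ≤ (m.bind κ).bind κ := by
  rw [Measure.le_iff]
  intro A hA
  rw [Measure.smul_apply, smul_eq_mul, Measure.bind_apply hA (Kernel.measurable κ).aemeasurable]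
  have hbK : δ' * m Set.univ ≤ (m.bind κ) K := by
    rw [Measure.bind_apply hK (Kernel.measurable κ).aemeasurable]
    calc δ' * m Set.univ = ∫⁻ _, δ' ∂m := (lintegral_const δ').symm
      _ ≤ ∫⁻ x, κ x K ∂m := lintegral_mono hb
  calc δ * δ' * m Set.univ * νstar A = (δ * νstar A) * (δ' * m Set.univ) := by ring
    _ ≤ (δ * νstar A) * ((m.bind κ) K) := mul_le_mul_right hbK _
    _ = ∫⁻ _ in K, δ * νstar A ∂(m.bind κ) := by rw [setLIntegral_const, mul_comm]
    _ ≤ ∫⁻ y in K, κ y A ∂(m.bind κ) :=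
        setLIntegral_mono (κ.measurable_coe hA) (fun y hy => ha y hy A hA)
    _ ≤ ∫⁻ y, κ y A ∂(m.bind κ) := setLIntegral_le_lintegral _ _

lemma tv_contraction (ε : ℝ≥0∞) (hε1 : ε ≤ 1) (νstar : Measure X) [IsProbabilityMeasure νstar]
    (hmin : ∀ m : Measure X, ((ε * m Set.univ) • νstar) ≤ (m.bind κ).bind κ)
    (μ ν : Measure X) [IsFiniteMeasure μ] [IsFiniteMeasure ν]
    (hmass : μ Set.univ = ν Set.univ) :
    tvNorm ((μ.bind κ).bind κ) ((ν.bind κ).bind κ) ≤ (1 - ε) * tvNorm μ ν := by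
  obtain ⟨p, q, hfp, hfq, hadd, htv, -⟩ := exists_jordan μ ν
  have hεtop : ε ≠ ∞ := fun h => by simp [h] at hε1
  -- masses of p and q agree
  have hq_univ : q Set.univ = p Set.univ := by
    have h2 := Measure.ext_iff.mp hadd Set.univ MeasurableSet.univ
    simp only [Measure.add_apply] at h2
    rw [hmass] at h2
    exact WithTop.add_left_cancel (measure_ne_top ν _) h2
  set a := p Set.univ with ha
  have hatop : a ≠ ∞ := measure_ne_top p _
  set c := ε * a with hc
  have hctop : c ≠ ∞ := ENNReal.mul_ne_top hεtop hatop
  haveI : IsFiniteMeasure (c • νstar) :=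
    ⟨by rw [Measure.smul_apply, smul_eq_mul, measure_univ, mul_one]; exact hctop.lt_top⟩
  have hlep : (c • νstar) ≤ (p.bind κ).bind κ := hmin p
  have hleq : (c • νstar) ≤ (q.bind κ).bind κ := by
    have := hmin q
    rwa [hq_univ] at this
  set p' := (p.bind κ).bind κ - c • νstar with hp'
  set q' := (q.bind κ).bind κ - c • νstar with hq'
  haveI : IsFiniteMeasure p' := Measure.isFiniteMeasure_sub
  haveI : IsFiniteMeasure q' := Measure.isFiniteMeasure_sub
  have hpc : p' + c • νstar = (p.bind κ).bind κ := Measure.sub_add_cancel_of_le hlep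
  have hqc : q' + c • νstar = (q.bind κ).bind κ := Measure.sub_add_cancel_of_le hleq
  have hTadd : (μ.bind κ).bind κ + (q.bind κ).bind κ
      = (ν.bind κ).bind κ + (p.bind κ).bind κ := by
    rw [← bind_add, ← bind_add, ← bind_add, ← bind_add, hadd]
  have key : (μ.bind κ).bind κ + q' = (ν.bind κ).bind κ + p' := by
    apply measure_add_cancel _ _ (c • νstar)
    rw [add_assoc, hqc, add_assoc, hpc]
    exact hTadd
  have heq := tvNorm_eq_of_add_eq _ _ p' q' key
  rw [heq]
  have hmassp : p' Set.univ = a - c := by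
    rw [hp', Measure.sub_apply MeasurableSet.univ hlep, bind_univ, bind_univ,
      Measure.smul_apply, smul_eq_mul, measure_univ (μ := νstar), mul_one]
  have hmassq : q' Set.univ = a - c := by
    rw [hq', Measure.sub_apply MeasurableSet.univ hleq, bind_univ, bind_univ,
      Measure.smul_apply, smul_eq_mul, measure_univ (μ := νstar), mul_one, hq_univ]
  have hsub : a - c = (1 - ε) * a := by
    rw [ENNReal.sub_mul (fun _ _ => hatop), one_mul, hc]
  calc tvNorm p' q' ≤ p' Set.univ + q' Set.univ := tvNorm_le p' q'
    _ = (1 - ε) * a + (1 - ε) * a := by rw [hmassp, hmassq, hsub]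
    _ = (1 - ε) * (a + a) := (mul_add _ _ _).symm
    _ = (1 - ε) * tvNorm μ ν := by rw [htv, hq_univ]




set_option maxHeartbeats 1000000 in
lemma exists_T_invariant (ε : ℝ≥0∞) (hε0 : 0 < ε) (hε1 : ε ≤ 1) (hεtop : ε ≠ ∞)
    (νstar : Measure X) [IsProbabilityMeasure νstar]
    (hmin : ∀ m : Measure X, ((ε * m Set.univ) • νstar) ≤ (m.bind κ).bind κ) :
    ∃ μstar : Measure X, IsProbabilityMeasure μstar ∧ (μstar.bind κ).bind κ = μstar := by
  set S : Measure X → Measure X :=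
    fun m => ((m.bind κ).bind κ) - ((ε * m Set.univ) • νstar) with hS
  set M : ℕ → Measure X := fun n => S^[n] νstar with hMdef
  have hM0 : M 0 = νstar := rfl
  have hMsucc : ∀ n, M (n + 1) = S (M n) := fun n => Function.iterate_succ_apply' S n νstar
  have h1εtop : (1 - ε) ≠ ∞ := (tsub_le_self.trans_lt ENNReal.one_lt_top).ne
  have hpowtop : ∀ n : ℕ, (1 - ε) ^ n ≠ ∞ := fun n => ENNReal.pow_ne_top h1εtop
  have hmass : ∀ n, M n Set.univ = (1 - ε) ^ n := by
    intro n
    induction n with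
    | zero => rw [hM0, pow_zero, measure_univ]
    | succ n ih =>
      have hfin : ε * M n Set.univ ≠ ∞ := by
        rw [ih]; exact ENNReal.mul_ne_top hεtop (hpowtop n)
      haveI : IsFiniteMeasure ((ε * M n Set.univ) • νstar) :=
        ⟨by rw [Measure.smul_apply, smul_eq_mul, measure_univ (μ := νstar), mul_one]; exact hfin.lt_top⟩
      rw [hMsucc n]
      show (((M n).bind κ).bind κ - (ε * M n Set.univ) • νstar) Set.univ = _
      rw [Measure.sub_apply MeasurableSet.univ (hmin (M n)), bind_univ, bind_univ,
        Measure.smul_apply, smul_eq_mul, measure_univ (μ := νstar), mul_one, ih,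
        pow_succ, ENNReal.mul_sub (fun _ _ => hpowtop n), mul_one, mul_comm ((1 - ε) ^ n) ε]
  have hMfin : ∀ n, IsFiniteMeasure (M n) := fun n =>
    ⟨by rw [hmass n]; exact (hpowtop n).lt_top⟩
  have hTM : ∀ n, ((M n).bind κ).bind κ = M (n + 1) + (ε * (1 - ε) ^ n) • νstar := by
    intro n
    haveI : IsFiniteMeasure ((ε * M n Set.univ) • νstar) :=
      ⟨by rw [Measure.smul_apply, smul_eq_mul, measure_univ (μ := νstar), mul_one, hmass n]
          exact (ENNReal.mul_ne_top hεtop (hpowtop n)).lt_top⟩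
    rw [hMsucc n]
    show ((M n).bind κ).bind κ
      = (((M n).bind κ).bind κ - (ε * M n Set.univ) • νstar) + (ε * (1 - ε) ^ n) • νstar
    rw [← hmass n]
    exact (Measure.sub_add_cancel_of_le (hmin (M n))).symm
  have hgeom : (∑' n : ℕ, ε * (1 - ε) ^ n) = 1 := by
    rw [ENNReal.tsum_mul_left, ENNReal.tsum_geometric, ENNReal.sub_sub_cancel ENNReal.one_ne_top hε1,
      ENNReal.mul_inv_cancel hε0.ne' hεtop]
  clear_value M
  clear_value S
  clear hMdef hS
  refine ⟨ε • Measure.sum M, ⟨?_⟩, ?_⟩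
  · rw [Measure.smul_apply, Measure.sum_apply _ MeasurableSet.univ, smul_eq_mul,
      tsum_congr hmass, ENNReal.tsum_geometric, ENNReal.sub_sub_cancel ENNReal.one_ne_top hε1,
      ENNReal.mul_inv_cancel hε0.ne' hεtop]
  · rw [bind_smul, bind_smul, bind_sum, bind_sum]
    ext A hA
    rw [Measure.smul_apply, Measure.smul_apply, Measure.sum_apply _ hA,
      Measure.sum_apply _ hA, smul_eq_mul, smul_eq_mul]
    congr 1
    have h1 : ∀ n : ℕ,
        (((M n).bind κ).bind κ) A = M (n + 1) A + ε * (1 - ε) ^ n * νstar A := by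
      intro n
      rw [hTM n, Measure.add_apply, Measure.smul_apply, smul_eq_mul]
    calc (∑' n, (((M n).bind κ).bind κ) A)
        = ∑' n : ℕ, (M (n + 1) A + ε * (1 - ε) ^ n * νstar A) := tsum_congr h1
      _ = (∑' n : ℕ, M (n + 1) A) + (∑' n : ℕ, ε * (1 - ε) ^ n) * νstar A := by
          rw [ENNReal.tsum_add, ENNReal.tsum_mul_right]
      _ = νstar A + ∑' n : ℕ, M (n + 1) A := by rw [hgeom, one_mul, add_comm]
      _ = M 0 A + ∑' n : ℕ, M (n + 1) A := by rw [hM0]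
      _ = ∑' n, M n A := (tsum_eq_zero_add' (f := fun n => M n A) ENNReal.summable).symm

instance iterate_T_prob (μ : Measure X) [IsProbabilityMeasure μ] (k : ℕ) :
    IsProbabilityMeasure ((fun m : Measure X => (m.bind κ).bind κ)^[k] μ) := by
  induction k with
  | zero => simpa
  | succ k ih =>
    rw [Function.iterate_succ_apply']
    exact bind_isProbabilityMeasure κ _

lemma iterate_contraction (ε : ℝ≥0∞) (hε1 : ε ≤ 1)
    (νstar : Measure X) [IsProbabilityMeasure νstar]
    (hmin : ∀ m : Measure X, ((ε * m Set.univ) • νstar) ≤ (m.bind κ).bind κ)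
    (k : ℕ) (α β : Measure X) [IsProbabilityMeasure α] [IsProbabilityMeasure β] :
    tvNorm ((fun m : Measure X => (m.bind κ).bind κ)^[k] α)
      ((fun m : Measure X => (m.bind κ).bind κ)^[k] β) ≤ (1 - ε) ^ k * tvNorm α β := by
  induction k generalizing α β with
  | zero => simp
  | succ k ih =>
    show tvNorm ((fun m : Measure X => (m.bind κ).bind κ)^[k] ((α.bind κ).bind κ))
      ((fun m : Measure X => (m.bind κ).bind κ)^[k] ((β.bind κ).bind κ))
      ≤ (1 - ε) ^ (k + 1) * tvNorm α β
    calc tvNorm ((fun m : Measure X => (m.bind κ).bind κ)^[k] ((α.bind κ).bind κ))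
          ((fun m : Measure X => (m.bind κ).bind κ)^[k] ((β.bind κ).bind κ))
        ≤ (1 - ε) ^ k * tvNorm ((α.bind κ).bind κ) ((β.bind κ).bind κ) :=
          ih ((α.bind κ).bind κ) ((β.bind κ).bind κ)
      _ ≤ (1 - ε) ^ k * ((1 - ε) * tvNorm α β) :=
          mul_le_mul_right (tv_contraction κ ε hε1 νstar hmin α β (by simp)) _
      _ = (1 - ε) ^ (k + 1) * tvNorm α β := by rw [← mul_assoc, ← pow_succ]

lemma tvNorm_le_two (α β : Measure X) [IsProbabilityMeasure α] [IsProbabilityMeasure β] :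
    tvNorm α β ≤ 2 := by
  calc tvNorm α β ≤ α Set.univ + β Set.univ := tvNorm_le α β
    _ = 2 := by rw [measure_univ, measure_univ]; norm_num

lemma T_invariant_unique (ε : ℝ≥0∞) (hε0 : 0 < ε) (hε1 : ε ≤ 1)
    (νstar : Measure X) [IsProbabilityMeasure νstar]
    (hmin : ∀ m : Measure X, ((ε * m Set.univ) • νstar) ≤ (m.bind κ).bind κ)
    (α β : Measure X) [IsProbabilityMeasure α] [IsProbabilityMeasure β]
    (hα : (α.bind κ).bind κ = α) (hβ : (β.bind κ).bind κ = β) : α = β := by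
  have h2 : tvNorm α β ≤ 2 := tvNorm_le_two α β
  have h1 : tvNorm α β ≤ (1 - ε) * tvNorm α β := by
    have := tv_contraction κ ε hε1 νstar hmin α β (by simp)
    rwa [tvNorm_congr _ _ _ _ hα hβ] at this
  by_cases h0 : tvNorm α β = 0
  · exact tvNorm_eq_zero _ _ h0
  · exfalso
    have htop : tvNorm α β ≠ ∞ := (h2.trans_lt (by norm_num)).ne
    have hlt : (1 - ε) * tvNorm α β < 1 * tvNorm α β := by
      rw [mul_comm _ (tvNorm α β), mul_comm (1 : ℝ≥0∞)]
      exact ENNReal.mul_lt_mul_right h0 htop (ENNReal.sub_lt_self ENNReal.one_ne_top one_ne_zero hε0.ne')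
    rw [one_mul] at hlt
    exact absurd h1 (not_le.mpr hlt)


end DoeblinAux

theorem doeblin_exponential_convergence
    {X : Type*} [MeasurableSpace X] (κ : Kernel X X) [IsMarkovKernel κ]
    (K : Set X) (hK : MeasurableSet K)
    (δ : ℝ≥0∞) (hδ : 0 < δ) (νstar : Measure X) [IsProbabilityMeasure νstar]
    (ha : ∀ x ∈ K, ∀ A : Set X, MeasurableSet A → δ * νstar A ≤ κ x A)
    (δ' : ℝ≥0∞) (hδ' : 0 < δ')
    (hb : ∀ x : X, δ' ≤ κ x K) :
    ∃ μstar : Measure X, ∃ _ : IsProbabilityMeasure μstar,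
      μstar.bind κ = μstar ∧
      (∀ ν : Measure X, IsProbabilityMeasure ν → ν.bind κ = ν → ν = μstar) ∧
      ∀ (μ : Measure X) [IsProbabilityMeasure μ], ∀ n : ℕ,
        tvNorm ((fun m : Measure X => m.bind κ)^[n] μ) μstar
          ≤ 2 * (1 - δ * δ') ^ (n / 2) := by
  have hXne : Nonempty X := by
    by_contra h
    have h0 : νstar Set.univ = 0 := by
      rw [Set.univ_eq_empty_iff.mpr (not_nonempty_iff.mp h)]
      simp
    rw [measure_univ] at h0
    exact one_ne_zero h0
  obtain ⟨x1, hx1⟩ : K.Nonempty := by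
    rcases Set.eq_empty_or_nonempty K with h | h
    · exfalso
      have h2 := hb hXne.some
      rw [h] at h2
      simp only [measure_empty] at h2
      exact hδ'.ne' (le_antisymm h2 hδ'.le)
    · exact h
  have hδle : δ ≤ 1 := by
    have h1 := ha x1 hx1 Set.univ MeasurableSet.univ
    rw [measure_univ, mul_one] at h1
    calc δ ≤ κ x1 Set.univ := h1
      _ = 1 := measure_univ
  have hδ'le : δ' ≤ 1 := (hb x1).trans prob_le_one
  have hε1 : δ * δ' ≤ 1 := by
    calc δ * δ' ≤ 1 * 1 := mul_le_mul' hδle hδ'le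
      _ = 1 := one_mul 1
  have hε0 : 0 < δ * δ' := ENNReal.mul_pos hδ.ne' hδ'.ne'
  have hεtop : δ * δ' ≠ ∞ := (hε1.trans_lt ENNReal.one_lt_top).ne
  have hmin := DoeblinAux.minorization κ K hK δ νstar ha δ' hb
  obtain ⟨μstar, hprob, hTinv⟩ :=
    DoeblinAux.exists_T_invariant κ (δ * δ') hε0 hε1 hεtop νstar hmin
  haveI := hprob
  have hBinv : μstar.bind κ = μstar := by
    apply DoeblinAux.T_invariant_unique κ (δ * δ') hε0 hε1 νstar hmin
    · show (((μstar.bind κ).bind κ)).bind κ = μstar.bind κ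
      rw [hTinv]
    · exact hTinv
  refine ⟨μstar, hprob, hBinv, ?_, ?_⟩
  · intro ν hν hinv
    haveI := hν
    exact DoeblinAux.T_invariant_unique κ (δ * δ') hε0 hε1 νstar hmin ν μstar
      (by rw [hinv, hinv]) hTinv
  · intro μ hμ n
    have hn : 2 * (n / 2) + n % 2 = n := Nat.div_add_mod n 2
    have hB2 : (fun m : Measure X => m.bind κ)^[2 * (n / 2)]
        = (fun m : Measure X => (m.bind κ).bind κ)^[n / 2] := by
      rw [Function.iterate_mul]
      congr 1
    have hiter_eq : (fun m : Measure X => m.bind κ)^[n] μ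
        = (fun m : Measure X => (m.bind κ).bind κ)^[n / 2]
          ((fun m : Measure X => m.bind κ)^[n % 2] μ) := by
      conv_lhs => rw [← hn]
      rw [Function.iterate_add_apply, hB2]
    have hfix : (fun m : Measure X => (m.bind κ).bind κ)^[n / 2] μstar = μstar :=
      Function.iterate_fixed hTinv (n / 2)
    haveI : IsProbabilityMeasure ((fun m : Measure X => m.bind κ)^[n % 2] μ) :=
      iterate_bind_isProbabilityMeasure κ μ (n % 2)
    calc tvNorm ((fun m : Measure X => m.bind κ)^[n] μ) μstar
        = tvNorm ((fun m : Measure X => (m.bind κ).bind κ)^[n / 2]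
            ((fun m : Measure X => m.bind κ)^[n % 2] μ))
          ((fun m : Measure X => (m.bind κ).bind κ)^[n / 2] μstar) :=
          DoeblinAux.tvNorm_congr _ _ _ _ hiter_eq hfix.symm
      _ ≤ (1 - δ * δ') ^ (n / 2)
            * tvNorm ((fun m : Measure X => m.bind κ)^[n % 2] μ) μstar :=
          DoeblinAux.iterate_contraction κ (δ * δ') hε1 νstar hmin (n / 2) _ _
      _ ≤ (1 - δ * δ') ^ (n / 2) * 2 := mul_le_mul_right (DoeblinAux.tvNorm_le_two _ _) _
      _ = 2 * (1 - δ * δ') ^ (n / 2) := mul_comm _ _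
end

section
/- Let X be a Polish space with its Borel σ-algebra and let κ be a Markov kernel on X which is strong Feller. Suppose there exist m ≥ 1, a measurable set A which is accessible (κ(x, A) > 0 for every x ∈ X), a constant δ > 0 and a probability measure ν such that κ^m(y, B) ≥ δ·ν(B) for every y ∈ A and every measurable set B. Then every compact set C ⊆ X is (m+1)-small: there exist δ'' > 0 and a probability measure ν' such that κ^(m+1)(x, B) ≥ δ''·ν'(B) for every x ∈ C and every measurable set B. -/
open MeasureTheory ProbabilityTheory

/-- The `m`-step transition kernel: `kpow κ m` is the `m`-fold composition of `κ`
with itself, so that `kpow κ (m+1) x D = ∫ kpow κ m y D κ(x, dy)`. -/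
noncomputable def kpow {X : Type*} [MeasurableSpace X] (κ : Kernel X X) : ℕ → Kernel X X
  | 0 => Kernel.id
  | n + 1 => kpow κ n ∘ₖ κ

open scoped ENNReal in
theorem compact_sets_are_small_of_accessible_small_set
    {X : Type*} [TopologicalSpace X] [PolishSpace X] [MeasurableSpace X] [BorelSpace X]
    (κ : Kernel X X) [IsMarkovKernel κ]
    (hFeller : ∀ φ : X → ℝ, Measurable φ → (∃ M, ∀ x, |φ x| ≤ M) →
      Continuous fun x => ∫ y, φ y ∂(κ x))
    (m : ℕ) (hm : 1 ≤ m) (A : Set X) (hA : MeasurableSet A)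
    (hacc : ∀ x : X, 0 < κ x A)
    (δ : ℝ≥0∞) (hδ : 0 < δ) (ν : Measure X) [IsProbabilityMeasure ν]
    (hsmall : ∀ y ∈ A, ∀ B : Set X, MeasurableSet B → δ * ν B ≤ kpow κ m y B)
    (C : Set X) (hC : IsCompact C) :
    ∃ δ'' : ℝ≥0∞, 0 < δ'' ∧ ∃ ν' : Measure X, IsProbabilityMeasure ν' ∧
      ∀ x ∈ C, ∀ B : Set X, MeasurableSet B → δ'' * ν' B ≤ kpow κ (m + 1) x B := by
  classical
  have hf : Continuous fun x => (κ x A).toReal := by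
    have h := hFeller (A.indicator fun _ => (1 : ℝ))
      (measurable_const.indicator hA)
      ⟨1, fun x => by by_cases h : x ∈ A <;> simp [Set.indicator, h]⟩
    convert h using 2 with x
    rw [integral_indicator_const _ hA]
    simp
    rfl
  rcases C.eq_empty_or_nonempty with h | hne
  · exact ⟨δ, hδ, ν, inferInstance, by simp [h]⟩
  · obtain ⟨x₀, hx₀C, hx₀⟩ := hC.exists_isMinOn hne hf.continuousOn
    set ε := (κ x₀ A).toReal with hε
    have hεpos : 0 < ε := ENNReal.toReal_pos (hacc x₀).ne' (measure_ne_top _ _)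
    refine ⟨δ * ENNReal.ofReal ε, ?_, ν, inferInstance, ?_⟩
    · exact ENNReal.mul_pos hδ.ne' (ENNReal.ofReal_pos.2 hεpos).ne'
    · intro x hx B hB
      have hκxA : ENNReal.ofReal ε ≤ κ x A := by
        rw [← ENNReal.ofReal_toReal (measure_ne_top (κ x) A)]
        exact ENNReal.ofReal_le_ofReal (hx₀ hx)
      have hcomp : kpow κ (m + 1) x B = ∫⁻ y, kpow κ m y B ∂(κ x) := by
        show (kpow κ m ∘ₖ κ) x B = _
        rw [Kernel.comp_apply' _ _ _ hB]
      rw [hcomp]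
      calc δ * ENNReal.ofReal ε * ν B = δ * ν B * ENNReal.ofReal ε := by ring
        _ ≤ δ * ν B * κ x A := by gcongr
        _ = ∫⁻ _ in A, δ * ν B ∂(κ x) := by rw [setLIntegral_const]
        _ ≤ ∫⁻ y in A, kpow κ m y B ∂(κ x) :=
            setLIntegral_mono ((kpow κ m).measurable_coe hB)
              (fun y hy => hsmall y hy B hB)
        _ ≤ ∫⁻ y, kpow κ m y B ∂(κ x) := setLIntegral_le_lintegral _ _
end
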